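/- arXiv:1905.09432 — 2 statements merged into one kernel-verified Lean document; each statement's English description precedes it below -/
import Mathlib

section
/- Let X and Z = Z_1 × ... × Z_m be nonempty finite types, let q be a joint probability mass function on X × Z with marginals q_X on X and q_Z on Z, let q_j denote the j-th coordinate marginal of q_Z, and let p = p_1 ⊗ ... ⊗ p_m be a fully factorized PMF on Z with p_j(z_j) > 0 for all z_j. Then the expected KL divergence of the conditional posterior to the factorized prior decomposes as: Σ_x q_X(x) · D_KL(q(·|x) ‖ p) = I(x; z) + TC(q_Z) + Σ_{j=1}^m D_KL(q_j ‖ p_j), where I(x; z) is the mutual information between x and z under q and TC(q_Z) is the total correlation of the marginal q_Z. -/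
open Finset

/-- A probability mass function on a finite type: nonnegative and sums to 1. -/
def IsPMF {α : Type*} [Fintype α] (q : α → ℝ) : Prop :=
  (∀ a, 0 ≤ q a) ∧ ∑ a, q a = 1

/-- Kullback–Leibler divergence between PMFs on a finite type,
with the convention `0 · log 0 = 0` (the sum runs over `a` with `q a > 0`). -/
noncomputable def KL {α : Type*} [Fintype α] (q p : α → ℝ) : ℝ :=
  ∑ a, if 0 < q a then q a * Real.log (q a / p a) else 0

/-- Mutual information of a joint PMF `q` on `α × β`:
`I(A;B) = D_KL(q ‖ q_A ⊗ q_B)` where `q_A`, `q_B` are the marginals. -/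
noncomputable def MI {α β : Type*} [Fintype α] [Fintype β] (q : α × β → ℝ) : ℝ :=
  KL q (fun ab => (∑ b, q (ab.1, b)) * (∑ a, q (a, ab.2)))

/-- The `j`-th coordinate marginal of a joint PMF `q` on a finite product. -/
noncomputable def margCoord {ι : Type*} [Fintype ι] [DecidableEq ι] {Z : ι → Type*}
    [∀ i, Fintype (Z i)] [∀ i, DecidableEq (Z i)]
    (q : (∀ i, Z i) → ℝ) (j : ι) (z : Z j) : ℝ :=
  ∑ w ∈ Finset.univ.filter (fun w : ∀ i, Z i => w j = z), q w

/-- Total correlation of a joint PMF `q` on a finite product: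
`TC(q) = D_KL(q ‖ q_1 ⊗ ... ⊗ q_m)`, the KL divergence from `q` to the product of
its coordinate marginals. -/
noncomputable def totalCorr {ι : Type*} [Fintype ι] [DecidableEq ι] {Z : ι → Type*}
    [∀ i, Fintype (Z i)] [∀ i, DecidableEq (Z i)]
    (q : (∀ i, Z i) → ℝ) : ℝ :=
  KL q (fun w => ∏ j, margCoord q j (w j))

/-- For a joint PMF `q` on `X × (Z_1 × ... × Z_m)` and a fully factorized
everywhere-positive PMF `p = p_1 ⊗ ... ⊗ p_m` on the product, the expected KL divergence
of the conditional posterior `q(·|x)` to `p` decomposes as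
`Σ_x q_X(x)·D_KL(q(·|x)‖p) = I(x;z) + TC(q_Z) + Σ_j D_KL(q_j‖p_j)`,
where `q_X`, `q_Z` are the marginals of `q`, and `q_j` the coordinate marginals of `q_Z`. -/
theorem expected_kl_decomposition
    {X : Type*} [Fintype X] [Nonempty X]
    {ι : Type*} [Fintype ι] [DecidableEq ι] (Z : ι → Type*)
    [∀ i, Fintype (Z i)] [∀ i, Nonempty (Z i)] [∀ i, DecidableEq (Z i)]
    (q : X × (∀ i, Z i) → ℝ) (hq : IsPMF q)
    (p : ∀ i, Z i → ℝ) (hp : ∀ i, IsPMF (p i)) (hppos : ∀ i z, 0 < p i z) :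
    ∑ x, (∑ z, q (x, z)) *
        KL (fun z => q (x, z) / (∑ z', q (x, z'))) (fun z => ∏ j, p j (z j)) =
      MI q + totalCorr (fun z => ∑ x, q (x, z)) +
        ∑ j, KL (margCoord (fun z => ∑ x, q (x, z)) j) (p j) := by
  classical
  obtain ⟨hq0, hq1⟩ := hq
  -- abbreviations
  let qZ : (∀ i, Z i) → ℝ := fun z => ∑ x, q (x, z)
  let qj : ∀ j, Z j → ℝ := fun j t => margCoord (fun z => ∑ x, q (x, z)) j t
  have hqZ0 : ∀ z, 0 ≤ ∑ x, q (x, z) := fun z => Finset.sum_nonneg fun _ _ => hq0 _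
  have hqX0 : ∀ x, 0 ≤ ∑ z, q (x, z) := fun x => Finset.sum_nonneg fun _ _ => hq0 _
  have hleX : ∀ x z, q (x, z) ≤ ∑ z', q (x, z') := fun x z =>
    Finset.single_le_sum (fun _ _ => hq0 _) (Finset.mem_univ z)
  have hleZ : ∀ x z, q (x, z) ≤ ∑ x', q (x', z) := fun x z =>
    Finset.single_le_sum (f := fun x' => q (x', z)) (fun _ _ => hq0 _) (Finset.mem_univ x)
  have hlej : ∀ (z : ∀ i, Z i) (j : ι), (∑ x, q (x, z)) ≤ qj j (z j) := by
    intro z j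
    refine Finset.single_le_sum (f := fun w => ∑ x, q (x, w)) (fun w _ => hqZ0 w) ?_
    simp
  have hqjpos : ∀ (x) (z : ∀ i, Z i) (j : ι), 0 < q (x, z) → 0 < qj j (z j) := by
    intro x z j h
    exact lt_of_lt_of_le (lt_of_lt_of_le h (hleZ x z)) (hlej z j)
  -- Step 1: LHS
  have hL : ∑ x, (∑ z, q (x, z)) *
        KL (fun z => q (x, z) / (∑ z', q (x, z'))) (fun z => ∏ j, p j (z j)) =
      ∑ x, ∑ z, (if 0 < q (x, z) then
        q (x, z) * Real.log (q (x, z) / ((∑ z', q (x, z')) * ∏ j, p j (z j))) else 0) := by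
    refine Finset.sum_congr rfl fun x _ => ?_
    rcases eq_or_lt_of_le (hqX0 x) with h | h
    · have hz : ∀ z, q (x, z) = 0 := by
        intro z
        have := (Finset.sum_eq_zero_iff_of_nonneg (fun z _ => hq0 (x, z))).1 h.symm
        exact this z (Finset.mem_univ z)
      simp [KL, hz]
    · rw [KL, Finset.mul_sum]
      refine Finset.sum_congr rfl fun z _ => ?_
      by_cases hz : 0 < q (x, z)
      · rw [if_pos (div_pos hz h), if_pos hz, div_div, ← mul_assoc,
          mul_div_cancel₀ _ (ne_of_gt h)]
      · have h0 : q (x, z) = 0 := le_antisymm (not_lt.1 hz) (hq0 _)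
        simp [h0]
  -- Step 2: MI
  have hMI : MI q = ∑ x, ∑ z, (if 0 < q (x, z) then
      q (x, z) * Real.log (q (x, z) / ((∑ z', q (x, z')) * (∑ x', q (x', z)))) else 0) := by
    rw [MI, KL, Fintype.sum_prod_type]
  -- Step 3: TC
  have hTC : totalCorr (fun z => ∑ x, q (x, z)) = ∑ x, ∑ z, (if 0 < q (x, z) then
      q (x, z) * Real.log ((∑ x', q (x', z)) / ∏ j, qj j (z j)) else 0) := by
    rw [totalCorr, KL, Finset.sum_comm]
    refine Finset.sum_congr rfl fun z _ => ?_
    by_cases h : 0 < ∑ x, q (x, z)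
    · rw [if_pos h, Finset.sum_mul]
      refine Finset.sum_congr rfl fun x _ => ?_
      by_cases hx : 0 < q (x, z)
      · rw [if_pos hx]
      · have h0 : q (x, z) = 0 := le_antisymm (not_lt.1 hx) (hq0 _)
        simp [h0]
    · have h0 : ∑ x, q (x, z) = 0 := le_antisymm (not_lt.1 h) (hqZ0 z)
      have hz : ∀ x, q (x, z) = 0 := by
        intro x
        exact (Finset.sum_eq_zero_iff_of_nonneg (fun x _ => hq0 (x, z))).1 h0 x
          (Finset.mem_univ x)
      simp [h0, hz]
  -- Step 4: the coordinate-marginal KL terms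
  have hj : ∀ j : ι, KL (margCoord (fun z => ∑ x, q (x, z)) j) (p j) =
      ∑ z : (∀ i, Z i), ∑ x, (if 0 < q (x, z) then
        q (x, z) * Real.log (qj j (z j) / p j (z j)) else 0) := by
    intro j
    rw [KL, ← Finset.sum_fiberwise Finset.univ (fun z : ∀ i, Z i => z j)
      (fun z => ∑ x, (if 0 < q (x, z) then
        q (x, z) * Real.log (qj j (z j) / p j (z j)) else 0))]
    refine Finset.sum_congr rfl fun t _ => ?_
    have hcong : ∀ z ∈ Finset.univ.filter (fun w : ∀ i, Z i => w j = t),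
        (∑ x, (if 0 < q (x, z) then
          q (x, z) * Real.log (qj j (z j) / p j (z j)) else 0)) =
        ∑ x, (if 0 < q (x, z) then
          q (x, z) * Real.log (qj j t / p j t) else 0) := by
      intro z hzmem
      have : z j = t := (Finset.mem_filter.1 hzmem).2
      rw [this]
    rw [Finset.sum_congr rfl hcong]
    have hqjeq : margCoord (fun z => ∑ x, q (x, z)) j t =
        ∑ z ∈ Finset.univ.filter (fun w : ∀ i, Z i => w j = t), ∑ x, q (x, z) := rfl
    by_cases h : 0 < margCoord (fun z => ∑ x, q (x, z)) j t
    · rw [if_pos h]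
      set L := Real.log (margCoord (fun z => ∑ x, q (x, z)) j t / p j t) with hLdef
      rw [hqjeq, Finset.sum_mul]
      refine Finset.sum_congr rfl fun z hz => ?_
      rw [Finset.sum_mul]
      refine Finset.sum_congr rfl fun x _ => ?_
      by_cases hx : 0 < q (x, z)
      · rw [if_pos hx]
      · have h0 : q (x, z) = 0 := le_antisymm (not_lt.1 hx) (hq0 _)
        simp [h0]
    · have h0 : margCoord (fun z => ∑ x, q (x, z)) j t = 0 := by
        have hnn : 0 ≤ margCoord (fun z => ∑ x, q (x, z)) j t :=
          Finset.sum_nonneg fun w _ => hqZ0 w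
        exact le_antisymm (not_lt.1 h) hnn
      have hzz : ∀ z ∈ Finset.univ.filter (fun w : ∀ i, Z i => w j = t),
          (∑ x, q (x, z)) = 0 := by
        intro z hz
        exact (Finset.sum_eq_zero_iff_of_nonneg (fun w _ => hqZ0 w)).1 (hqjeq ▸ h0) z hz
      rw [if_neg h]
      symm
      refine Finset.sum_eq_zero fun z hz => ?_
      refine Finset.sum_eq_zero fun x _ => ?_
      have : q (x, z) = 0 :=
        (Finset.sum_eq_zero_iff_of_nonneg (fun x _ => hq0 (x, z))).1 (hzz z hz) x
          (Finset.mem_univ x)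
      simp [this]
  have hKL : (∑ j, KL (margCoord (fun z => ∑ x, q (x, z)) j) (p j)) =
      ∑ x, ∑ z, (if 0 < q (x, z) then
        q (x, z) * ∑ j, Real.log (qj j (z j) / p j (z j)) else 0) := by
    have h1 : ∀ (x : X) (z : ∀ i, Z i),
        (if 0 < q (x, z) then
          q (x, z) * ∑ j, Real.log (qj j (z j) / p j (z j)) else 0) =
        ∑ j, (if 0 < q (x, z) then
          q (x, z) * Real.log (qj j (z j) / p j (z j)) else 0) := by
      intro x z
      by_cases hx : 0 < q (x, z)
      · simp only [if_pos hx, Finset.mul_sum]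
      · simp only [if_neg hx, Finset.sum_const_zero]
    simp only [hj, h1]
    have e1 : (∑ j, ∑ z : ∀ i, Z i, ∑ x, (if 0 < q (x, z) then
        q (x, z) * Real.log (qj j (z j) / p j (z j)) else 0)) =
        ∑ z : ∀ i, Z i, ∑ x, ∑ j, (if 0 < q (x, z) then
        q (x, z) * Real.log (qj j (z j) / p j (z j)) else 0) := by
      rw [Finset.sum_comm]
      exact Finset.sum_congr rfl fun z _ => Finset.sum_comm
    rw [e1, Finset.sum_comm]
  -- Combine
  rw [hL, hMI, hTC, hKL, ← Finset.sum_add_distrib, ← Finset.sum_add_distrib]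
  refine Finset.sum_congr rfl fun x _ => ?_
  rw [← Finset.sum_add_distrib, ← Finset.sum_add_distrib]
  refine Finset.sum_congr rfl fun z _ => ?_
  by_cases hx : 0 < q (x, z)
  · simp only [if_pos hx]
    have hX : 0 < ∑ z', q (x, z') := lt_of_lt_of_le hx (hleX x z)
    have hZ : 0 < ∑ x', q (x', z) := lt_of_lt_of_le hx (hleZ x z)
    have hjp : ∀ j, 0 < qj j (z j) := fun j => hqjpos x z j hx
    have hprodp : (0:ℝ) < ∏ j, p j (z j) := Finset.prod_pos fun j _ => hppos j (z j)
    have hprodq : (0:ℝ) < ∏ j, qj j (z j) := Finset.prod_pos fun j _ => hjp j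
    have hlog : Real.log (q (x, z) / ((∑ z', q (x, z')) * ∏ j, p j (z j))) =
        Real.log (q (x, z) / ((∑ z', q (x, z')) * (∑ x', q (x', z)))) +
        Real.log ((∑ x', q (x', z)) / ∏ j, qj j (z j)) +
        ∑ j, Real.log (qj j (z j) / p j (z j)) := by
      have hsum : ∑ j, Real.log (qj j (z j) / p j (z j)) =
          ∑ j, (Real.log (qj j (z j)) - Real.log (p j (z j))) := by
        refine Finset.sum_congr rfl fun j _ => ?_
        exact Real.log_div (ne_of_gt (hjp j)) (ne_of_gt (hppos j (z j)))
      rw [hsum, Finset.sum_sub_distrib,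
        Real.log_div (ne_of_gt hx) (ne_of_gt (mul_pos hX hprodp)),
        Real.log_div (ne_of_gt hx) (ne_of_gt (mul_pos hX hZ)),
        Real.log_div (ne_of_gt hZ) (ne_of_gt hprodq),
        Real.log_mul (ne_of_gt hX) (ne_of_gt hprodp),
        Real.log_mul (ne_of_gt hX) (ne_of_gt hZ),
        Real.log_prod (fun j _ => ne_of_gt (hppos j (z j))),
        Real.log_prod (fun j _ => ne_of_gt (hjp j))]
      ring
    rw [hlog]
    ring
  · simp only [if_neg hx]
    ring
end

section
/- Let X and Z be nonempty finite types, let q be a joint probability mass function on X × Z with marginal q_X on X, and let r(·|z) be, for each z ∈ Z, a PMF on X such that r(x|z) > 0 whenever q(x, z) > 0. Then the mutual information under q satisfies the variational lower bound I(x; z) ≥ H(q_X) + Σ_{(x,z) : q(x,z) > 0} q(x, z) · log r(x|z), where H(q_X) = -Σ_x q_X(x) · log q_X(x) is the entropy of the marginal of x. -/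
open Finset

/-- Entropy of a PMF on a finite type, `H(q) = -Σ_a q(a) · log q(a)`. -/
noncomputable def entropy {α : Type*} [Fintype α] (q : α → ℝ) : ℝ :=
  -∑ a, q a * Real.log (q a)

/-- Variational lower bound on mutual information.  For a joint PMF `q`
on `X × Z` with marginal `q_X`, and any family `r(·|z)` of PMFs on `X` with
`r(x|z) > 0` whenever `q(x,z) > 0`,
`I(x;z) ≥ H(q_X) + Σ_{(x,z) : q(x,z)>0} q(x,z) · log r(x|z)`. -/
theorem mi_ge_entropy_add_variational
    {X Z : Type*} [Fintype X] [Fintype Z] [Nonempty X] [Nonempty Z]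
    (q : X × Z → ℝ) (hq : IsPMF q)
    (r : Z → X → ℝ) (hr : ∀ z, IsPMF (r z))
    (hrpos : ∀ x z, 0 < q (x, z) → 0 < r z x) :
    MI q ≥ entropy (fun x => ∑ z, q (x, z)) +
      ∑ p ∈ Finset.univ.filter (fun p : X × Z => 0 < q p), q p * Real.log (r p.2 p.1) := by
  obtain ⟨hq0, hq1⟩ := hq
  set qX : X → ℝ := fun x => ∑ z, q (x, z) with hqX
  set qZ : Z → ℝ := fun z => ∑ x, q (x, z) with hqZ
  set p : X × Z → ℝ := fun ab => r ab.2 ab.1 * qZ ab.2 with hp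
  have hqX0 : ∀ x, 0 ≤ qX x := fun x => Finset.sum_nonneg fun z _ => hq0 (x, z)
  have hqZ0 : ∀ z, 0 ≤ qZ z := fun z => Finset.sum_nonneg fun x _ => hq0 (x, z)
  have hqXpos : ∀ x z, 0 < q (x, z) → 0 < qX x := by
    intro x z h
    exact lt_of_lt_of_le h (Finset.single_le_sum (fun z' _ => hq0 (x, z')) (Finset.mem_univ z))
  have hqZpos : ∀ x z, 0 < q (x, z) → 0 < qZ z := by
    intro x z h
    exact lt_of_lt_of_le h (Finset.single_le_sum (fun x' _ => hq0 (x', z)) (Finset.mem_univ x))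
  -- Gibbs: KL(q ‖ p) ≥ 0
  have hp0 : ∀ ab, 0 ≤ p ab := fun ab => mul_nonneg ((hr ab.2).1 ab.1) (hqZ0 ab.2)
  have hp1 : ∑ ab : X × Z, p ab = 1 := by
    rw [Fintype.sum_prod_type_right]
    have : ∀ z : Z, ∑ x : X, p (x, z) = qZ z := by
      intro z
      simp only [hp]
      rw [← Finset.sum_mul, (hr z).2, one_mul]
    rw [Finset.sum_congr rfl fun z _ => this z, ← hq1, Fintype.sum_prod_type_right]
  have hppos : ∀ ab, 0 < q ab → 0 < p ab := by
    intro ab h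
    exact mul_pos (hrpos ab.1 ab.2 h) (hqZpos ab.1 ab.2 h)
  have gibbs : 0 ≤ ∑ ab : X × Z, (if 0 < q ab then q ab * Real.log (q ab / p ab) else 0) := by
    have hterm : ∀ ab : X × Z, q ab - p ab ≤
        (if 0 < q ab then q ab * Real.log (q ab / p ab) else 0) := by
      intro ab
      by_cases h : 0 < q ab
      · simp only [if_pos h]
        have hpab := hppos ab h
        have hlog : Real.log (p ab / q ab) ≤ p ab / q ab - 1 :=
          Real.log_le_sub_one_of_pos (by positivity)
        have h2 : 1 - p ab / q ab ≤ Real.log (q ab / p ab) := by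
          rw [Real.log_div (ne_of_gt h) (ne_of_gt hpab)]
          rw [Real.log_div (ne_of_gt hpab) (ne_of_gt h)] at hlog
          linarith
        calc q ab - p ab = q ab * (1 - p ab / q ab) := by field_simp
          _ ≤ q ab * Real.log (q ab / p ab) :=
              mul_le_mul_of_nonneg_left h2 h.le
      · simp only [if_neg h]
        have hz : q ab = 0 := le_antisymm (not_lt.mp h) (hq0 ab)
        linarith [hp0 ab]
    calc (0:ℝ) = 1 - 1 := by ring
      _ ≤ (∑ ab : X × Z, q ab) - ∑ ab : X × Z, p ab := by rw [hq1, hp1]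
      _ = ∑ ab : X × Z, (q ab - p ab) := (Finset.sum_sub_distrib _ _).symm
      _ ≤ _ := Finset.sum_le_sum fun ab _ => hterm ab
  -- rewrite entropy as a sum over the product type
  have hent : entropy qX = -∑ ab : X × Z, q ab * Real.log (qX ab.1) := by
    unfold entropy
    congr 1
    rw [Fintype.sum_prod_type]
    refine Finset.sum_congr rfl fun x _ => ?_
    simp [hqX, Finset.sum_mul]
  -- termwise identity
  have hterm : ∀ ab : X × Z,
      (if 0 < q ab then q ab * Real.log (q ab / (qX ab.1 * qZ ab.2)) else 0)
      = -(q ab * Real.log (qX ab.1))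
        + (if 0 < q ab then q ab * Real.log (r ab.2 ab.1) else 0)
        + (if 0 < q ab then q ab * Real.log (q ab / p ab) else 0) := by
    intro ab
    by_cases h : 0 < q ab
    · simp only [if_pos h]
      obtain ⟨x, z⟩ := ab
      have hX := hqXpos x z h
      have hZ := hqZpos x z h
      have hR := hrpos x z h
      rw [Real.log_div (ne_of_gt h) (by positivity),
          Real.log_mul (ne_of_gt hX) (ne_of_gt hZ),
          Real.log_div (ne_of_gt h) (by simp only [hp]; positivity)]
      simp only [hp]
      rw [Real.log_mul (ne_of_gt hR) (ne_of_gt hZ)]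
      ring
    · simp only [if_neg h]
      have hz : q ab = 0 := le_antisymm (not_lt.mp h) (hq0 ab)
      rw [hz]
      ring
  have hMI : MI q = entropy qX
      + (∑ ab : X × Z, if 0 < q ab then q ab * Real.log (r ab.2 ab.1) else 0)
      + ∑ ab : X × Z, (if 0 < q ab then q ab * Real.log (q ab / p ab) else 0) := by
    unfold MI KL
    rw [hent]
    rw [Finset.sum_congr rfl fun ab _ => hterm ab]
    rw [Finset.sum_add_distrib, Finset.sum_add_distrib, Finset.sum_neg_distrib]
  have hS : (∑ p' ∈ Finset.univ.filter (fun p' : X × Z => 0 < q p'),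
      q p' * Real.log (r p'.2 p'.1))
      = ∑ ab : X × Z, if 0 < q ab then q ab * Real.log (r ab.2 ab.1) else 0 :=
    Finset.sum_filter _ _
  rw [ge_iff_le, hS, hMI]
  linarith [gibbs]
end
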